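/- Let p > 1 and let f be a probability density on ℝ with finite second moment Θ₀ = ∫_ℝ x² f dx > 0 and ∫_ℝ f^p dx < ∞, and let B be the Barenblatt profile of unit mass and second moment Θ₀. Then the Newman–Ralston relative entropy is bounded by the relative Rényi entropy as follows: H_p(f|B) ≤ (∫_ℝ f^p dx) · ( R_p(B) − R_p(f) ), where H_p(f|B) = (1/(p−1)) ∫_ℝ ( f^p − B^p − p B^{p−1}(f − B) ) dx. -/

import Mathlib

open MeasureTheory Filter Set

/-- The `p`-logarithm: `ln_p u = (u^(p-1) - 1)/(p-1)` for `p ≠ 1`, and `ln u` for `p = 1`. -/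
noncomputable def lnp (p : ℝ) (u : ℝ) : ℝ :=
  if p = 1 then Real.log u else (u ^ (p - 1) - 1) / (p - 1)

/-- Generalized Fisher information `I_p(f) = (1/2) ∫ f ((ln_p f)')²`. -/
noncomputable def fisherP (p : ℝ) (f : ℝ → ℝ) : ℝ :=
  (1 / 2) * ∫ x : ℝ, f x * (deriv (fun y => lnp p (f y)) x) ^ 2

/-- Rényi entropy of order `p ≠ 1`: `R_p(f) = (1/(1-p)) ln ∫ f^p`. -/
noncomputable def renyi (p : ℝ) (f : ℝ → ℝ) : ℝ :=
  (1 / (1 - p)) * Real.log (∫ x : ℝ, f x ^ p)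

/-- `f`, together with all its derivatives, decays faster than any polynomial at infinity. -/
def RapidDecay (f : ℝ → ℝ) : Prop :=
  ∀ n k : ℕ, Tendsto (fun x => x ^ n * iteratedDeriv k f x) (cocompact ℝ) (nhds 0)

/-- the Newman–Ralston relative entropy is bounded by the relative
Rényi entropy: `H_p(f|B) ≤ (∫ f^p) (R_p(B) − R_p(f))`. -/
theorem newman_ralston_le_renyi
    (p : ℝ) (hp : 1 < p)
    (f : ℝ → ℝ) (hf0 : ∀ x, 0 ≤ f x)
    (hfint : Integrable f) (hfmass : (∫ x : ℝ, f x) = 1)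
    (Θ₀ : ℝ) (hΘ₀ : 0 < Θ₀)
    (hfmom_int : Integrable (fun x => x ^ 2 * f x))
    (hfmom : (∫ x : ℝ, x ^ 2 * f x) = Θ₀)
    (hfp : Integrable (fun x => f x ^ p))
    (C k : ℝ) (hC : 0 < C) (hk : 0 < k)
    (B : ℝ → ℝ) (hB : ∀ y, B y = (max (C - k * y ^ 2) 0) ^ (1 / (p - 1)))
    (hBmass : (∫ y : ℝ, B y) = 1)
    (hBmom : (∫ y : ℝ, y ^ 2 * B y) = Θ₀) :
    (1 / (p - 1)) *
        ∫ x : ℝ, (f x ^ p - B x ^ p - p * B x ^ (p - 1) * (f x - B x)) ≤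
      (∫ x : ℝ, f x ^ p) * (renyi p B - renyi p f) := by
  have hp1 : 0 < p - 1 := by linarith
  have hexp : 0 < 1 / (p - 1) := by positivity
  have hppos : (0:ℝ) < p := by linarith
  have hpne : p ≠ 0 := ne_of_gt hppos
  -- nonnegativity of B
  have hBnn : ∀ y, 0 ≤ B y := fun y => by
    rw [hB]; exact Real.rpow_nonneg (le_max_right _ _) _
  -- B^(p-1) = max (C - k y²) 0
  have hq : ∀ y, B y ^ (p - 1) = max (C - k * y ^ 2) 0 := by
    intro y
    rw [hB, ← Real.rpow_mul (le_max_right _ _)]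
    rw [one_div, inv_mul_cancel₀ (ne_of_gt hp1), Real.rpow_one]
  -- B vanishes where C - k y² ≤ 0
  have hBzero : ∀ y, C - k * y ^ 2 ≤ 0 → B y = 0 := by
    intro y hy
    rw [hB, max_eq_right hy, Real.zero_rpow (by positivity)]
  -- B^p = (C - k y²) * B y
  have hBp_eq : ∀ y, B y ^ p = (C - k * y ^ 2) * B y := by
    intro y
    by_cases h : C - k * y ^ 2 ≤ 0
    · rw [hBzero y h, Real.zero_rpow hpne, mul_zero]
    · push_neg at h
      have hBy : 0 < B y := by
        rw [hB, max_eq_left h.le]; exact Real.rpow_pos_of_pos h _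
      have : B y ^ p = B y ^ (p - 1) * B y ^ (1:ℝ) := by
        rw [← Real.rpow_add hBy]; ring_nf
      rw [this, Real.rpow_one, hq, max_eq_left h.le]
  -- B^(p-1) * B = B^p
  have hBB : ∀ y, B y ^ (p - 1) * B y = B y ^ p := by
    intro y
    by_cases h : C - k * y ^ 2 ≤ 0
    · rw [hBzero y h, mul_zero, Real.zero_rpow hpne]
    · push_neg at h
      rw [hq, max_eq_left h.le, hBp_eq]
  -- continuity of B
  have hmax : Continuous fun y : ℝ => max (C - k * y ^ 2) 0 :=
    (continuous_const.sub (continuous_const.mul (continuous_pow 2))).max continuous_const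
  have hBcont : Continuous B := by
    have h3 : Continuous fun y : ℝ => (max (C - k * y ^ 2) 0) ^ (1 / (p - 1)) := by
      rw [continuous_iff_continuousAt]
      intro y
      exact ContinuousAt.comp (Real.continuousAt_rpow_const _ _ (Or.inr hexp.le))
        hmax.continuousAt
    exact h3.congr fun y => (hB y).symm
  -- compact support of B
  have hBsupp : HasCompactSupport B := by
    apply HasCompactSupport.intro (isCompact_Icc (a := -Real.sqrt (C / k)) (b := Real.sqrt (C / k)))
    intro x hx
    apply hBzero
    have hr : Real.sqrt (C / k) ^ 2 = C / k := Real.sq_sqrt (by positivity)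
    have : Real.sqrt (C / k) < |x| := by
      simp only [Set.mem_Icc, not_and_or, not_le] at hx
      rcases hx with h | h
      · rw [abs_of_neg (by nlinarith [Real.sqrt_nonneg (C / k)])]; linarith
      · rw [abs_of_pos (by nlinarith [Real.sqrt_nonneg (C / k)])]; linarith
    have hx2 : C / k < x ^ 2 := by
      rw [← hr]; rw [← sq_abs x]
      exact pow_lt_pow_left₀ this (Real.sqrt_nonneg _) (by norm_num)
    have h6 : k * (C / k) = C := by field_simp
    nlinarith [mul_lt_mul_of_pos_left hx2 hk]
  have intB : Integrable B := hBcont.integrable_of_hasCompactSupport hBsupp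
  have intx2B : Integrable (fun x => x ^ 2 * B x) := by
    have hc : Continuous fun x : ℝ => x ^ 2 * B x := (continuous_pow 2).mul hBcont
    exact hc.integrable_of_hasCompactSupport (hBsupp.mul_left)
  have intBp : Integrable (fun x => B x ^ p) := by
    have hc : Continuous fun x : ℝ => (C - k * x ^ 2) * B x :=
      (continuous_const.sub (continuous_const.mul (continuous_pow 2))).mul hBcont
    have h2 : Integrable (fun x : ℝ => (C - k * x ^ 2) * B x) :=
      hc.integrable_of_hasCompactSupport hBsupp.mul_left
    exact h2.congr (Filter.Eventually.of_forall fun x => (hBp_eq x).symm)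
  -- B^(p-1) f is integrable
  have hqle : ∀ x, B x ^ (p - 1) ≤ C := by
    intro x
    rw [hq]
    exact max_le (by nlinarith) hC.le
  have intBqf : Integrable (fun x => B x ^ (p - 1) * f x) := by
    apply (hfint.const_mul C).mono
    · have hc : Continuous fun x : ℝ => B x ^ (p - 1) := by
        have : (fun x : ℝ => B x ^ (p - 1)) = fun x => max (C - k * x ^ 2) 0 := funext hq
        rw [this]; exact hmax
      exact (hc.aestronglyMeasurable).mul hfint.aestronglyMeasurable
    · filter_upwards with x
      have h1 : 0 ≤ B x ^ (p - 1) := by rw [hq]; exact le_max_right _ _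
      rw [Real.norm_eq_abs, Real.norm_eq_abs, abs_of_nonneg (mul_nonneg h1 (hf0 x)),
        abs_of_nonneg (mul_nonneg hC.le (hf0 x))]
      exact mul_le_mul_of_nonneg_right (hqle x) (hf0 x)
  have intCkf : Integrable (fun x => (C - k * x ^ 2) * f x) := by
    have h2 : Integrable (fun x : ℝ => C * f x - k * (x ^ 2 * f x)) :=
      (hfint.const_mul C).sub (hfmom_int.const_mul k)
    exact h2.congr (Filter.Eventually.of_forall fun x => by ring)
  -- integral values
  have hBpval : (∫ x : ℝ, B x ^ p) = C - k * Θ₀ := by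
    have h1 : (∫ x : ℝ, B x ^ p) = ∫ x : ℝ, (C * B x - k * (x ^ 2 * B x)) := by
      congr 1; funext x; rw [hBp_eq]; ring
    rw [h1, integral_sub (intB.const_mul C) (intx2B.const_mul k),
      integral_const_mul, integral_const_mul, hBmass, hBmom, mul_one]
  have hCkfval : (∫ x : ℝ, (C - k * x ^ 2) * f x) = C - k * Θ₀ := by
    have h1 : (∫ x : ℝ, (C - k * x ^ 2) * f x) = ∫ x : ℝ, (C * f x - k * (x ^ 2 * f x)) := by
      congr 1; funext x; ring
    rw [h1, integral_sub (hfint.const_mul C) (hfmom_int.const_mul k),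
      integral_const_mul, integral_const_mul, hfmass, hfmom, mul_one]
  -- ∫ B^(p-1) f ≥ C - kΘ₀
  have hD : C - k * Θ₀ ≤ ∫ x : ℝ, B x ^ (p - 1) * f x := by
    rw [← hCkfval]
    apply integral_mono intCkf intBqf
    intro x
    have : C - k * x ^ 2 ≤ B x ^ (p - 1) := by rw [hq]; exact le_max_left _ _
    exact mul_le_mul_of_nonneg_right this (hf0 x)
  -- positivity of ∫ f^p
  have hFpos : 0 < ∫ x : ℝ, f x ^ p := by
    rcases (integral_nonneg (f := fun x => f x ^ p) fun x => Real.rpow_nonneg (hf0 x) p).lt_or_eq with h | h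
    · exact h
    · exfalso
      have hz := (integral_eq_zero_iff_of_nonneg (fun x => Real.rpow_nonneg (hf0 x) p)
        hfp).mp h.symm
      have hf0ae : f =ᵐ[volume] 0 := by
        filter_upwards [hz] with x hx
        have : f x ^ p = 0 := hx
        exact ((Real.rpow_eq_zero (hf0 x) hpne).mp this)
      have : (∫ x : ℝ, f x) = 0 := by
        rw [integral_congr_ae hf0ae]; simp
      rw [hfmass] at this; norm_num at this
  -- positivity of ∫ B^p
  have hGpos : 0 < C - k * Θ₀ := by
    rw [← hBpval]
    rcases (integral_nonneg (f := fun x => B x ^ p) fun x => Real.rpow_nonneg (hBnn x) p).lt_or_eq with h | h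
    · exact h
    · exfalso
      have hz := (integral_eq_zero_iff_of_nonneg (fun x => Real.rpow_nonneg (hBnn x) p)
        intBp).mp h.symm
      have hB0ae : B =ᵐ[volume] 0 := by
        filter_upwards [hz] with x hx
        exact ((Real.rpow_eq_zero (hBnn x) hpne).mp hx)
      have : (∫ x : ℝ, B x) = 0 := by
        rw [integral_congr_ae hB0ae]; simp
      rw [hBmass] at this; norm_num at this
  -- splitting the integral
  set F := ∫ x : ℝ, f x ^ p with hFdef
  set G := C - k * Θ₀ with hGdef
  set D := ∫ x : ℝ, B x ^ (p - 1) * f x with hDdef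
  have hsplit : (∫ x : ℝ, (f x ^ p - B x ^ p - p * B x ^ (p - 1) * (f x - B x)))
      = F - G - p * D + p * G := by
    have heq : (fun x : ℝ => f x ^ p - B x ^ p - p * B x ^ (p - 1) * (f x - B x))
        = fun x => f x ^ p - B x ^ p - p * (B x ^ (p - 1) * f x) + p * (B x ^ p) := by
      funext x; rw [← hBB x]; ring
    have i1 : Integrable (fun x : ℝ => f x ^ p - B x ^ p) := hfp.sub intBp
    have i2 : Integrable (fun x : ℝ => f x ^ p - B x ^ p - p * (B x ^ (p - 1) * f x)) :=
      i1.sub (intBqf.const_mul p)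
    rw [heq, integral_add i2 (intBp.const_mul p), integral_sub i1 (intBqf.const_mul p),
      integral_sub hfp intBp, integral_const_mul, integral_const_mul, hBpval]
  rw [hsplit]
  -- the Rényi side
  have hrenyi : renyi p B - renyi p f = (1 / (1 - p)) * (Real.log G - Real.log F) := by
    unfold renyi
    rw [hBpval]
    ring
  rw [hrenyi]
  -- key log inequality : F - G ≤ F * (log F - log G)
  have hkey : F - G ≤ F * (Real.log F - Real.log G) := by
    have h1 := Real.log_le_sub_one_of_pos (show 0 < G / F by positivity)
    rw [Real.log_div (ne_of_gt hGpos) (ne_of_gt hFpos)] at h1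
    have h2 : F * (Real.log G - Real.log F) ≤ F * (G / F - 1) :=
      mul_le_mul_of_nonneg_left h1 hFpos.le
    have h3 : F * (G / F - 1) = G - F := by field_simp
    nlinarith
  have hDG : 0 ≤ p * (D - G) := mul_nonneg hppos.le (by linarith)
  have h4 : (1 / (p - 1)) * (F - G - p * D + p * G) ≤ (1 / (p - 1)) * (F - G) := by
    apply mul_le_mul_of_nonneg_left _ hexp.le
    nlinarith
  have h5 : (1 / (p - 1)) * (F - G) ≤ F * ((1 / (1 - p)) * (Real.log G - Real.log F)) := by
    have hee : (1:ℝ) / (1 - p) = -(1 / (p - 1)) := by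
      rw [show (1:ℝ) - p = -(p - 1) by ring, div_neg]
    have : F * ((1 / (1 - p)) * (Real.log G - Real.log F))
        = (1 / (p - 1)) * (F * (Real.log F - Real.log G)) := by
      rw [hee]; ring
    rw [this]
    exact mul_le_mul_of_nonneg_left hkey hexp.le
  linarith
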